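/- Let n ≥ 1, m ≥ 0, l ≥ 1 and let C_1,…,C_m, F_1,…,F_l, U, V, W : N → M_n(ℂ) be holomorphic maps on a connected open neighborhood N of 0 in ℂ^m × ℂ^l satisfying the system: [C_i,C_j]=0, [C_i,F_α]=0, [F_α,F_β]=0, ∂C_i/∂t_j=∂C_j/∂t_i, ∂C_i/∂y_α=∂F_α/∂t_i, ∂F_α/∂y_β=∂F_β/∂y_α, [C_i,U]=0, [F_α,U]=0, ∂U/∂t_i=[V,C_i]−C_i, ∂U/∂y_α=[V,F_α]−F_α, ∂W/∂t_i=[W,C_i], ∂W/∂y_α=[W,F_α], ∂V/∂t_i=−[W,C_i], ∂V/∂y_α=−[W,F_α]. Then: (1) V + W is a constant matrix Res_∞; (2) if moreover A : N → M_n(ℂ) is holomorphic with ∂A/∂t_i = C_i and ∂A/∂y_α = F_α for all i, α, then the map U + W + A − [Res_∞, A] is constant on N; in particular, for any two points (t,y), (t,0) ∈ N one has U(t,y) = U(t,0) − (W(t,y) − W(t,0)) + [Res_∞, A(t,y) − A(t,0)] − (A(t,y) − A(t,0)). -/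

import Mathlib

/-!
Statement 3 (Remark 2.10, first part): for a flat system, `V + W` is constant,
and with a primitive `A` of the 1-form `Σ C_i dt_i + Σ F_α dy_α` the combination
`U + W + A − [Res_∞, A]` is constant.
-/

noncomputable section

/-- `n × n` complex matrices. -/
abbrev Mat (n : ℕ) := Matrix (Fin n) (Fin n) ℂ

/-- The commutator `[A,B] = A*B - B*A`. -/
def matComm {n : ℕ} (A B : Mat n) : Mat n := A * B - B * A

/-- Entrywise holomorphy of a matrix-valued map on a set. -/
def MDiffOn {E : Type*} [NormedAddCommGroup E] [NormedSpace ℂ E] {n : ℕ}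
    (f : E → Mat n) (s : Set E) : Prop :=
  ∀ k j, DifferentiableOn ℂ (fun q => f q k j) s

/-- Entrywise partial derivative of a matrix-valued map at `p` in direction `v`. -/
def mpderiv {E : Type*} [NormedAddCommGroup E] [NormedSpace ℂ E] {n : ℕ}
    (f : E → Mat n) (p v : E) : Mat n :=
  Matrix.of fun k j => fderiv ℂ (fun q => f q k j) p v

/-- Points of `ℂ^m × ℂ^l` with coordinates `(t, y)`. -/
abbrev Pt (m l : ℕ) := (Fin m → ℂ) × (Fin l → ℂ)

/-- The full flatness system (2.16)–(2.29) at a point `p`. -/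
def FullSystemAt {n m l : ℕ}
    (C : Fin m → Pt m l → Mat n) (F : Fin l → Pt m l → Mat n)
    (U V W : Pt m l → Mat n) (p : Pt m l) : Prop :=
  (∀ i j, matComm (C i p) (C j p) = 0) ∧
  (∀ i α, matComm (C i p) (F α p) = 0) ∧
  (∀ α β, matComm (F α p) (F β p) = 0) ∧
  (∀ i j, mpderiv (C i) p (Pi.single j 1, 0) = mpderiv (C j) p (Pi.single i 1, 0)) ∧
  (∀ i α, mpderiv (C i) p (0, Pi.single α 1) = mpderiv (F α) p (Pi.single i 1, 0)) ∧
  (∀ α β, mpderiv (F α) p (0, Pi.single β 1) = mpderiv (F β) p (0, Pi.single α 1)) ∧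
  (∀ i, matComm (C i p) (U p) = 0) ∧
  (∀ α, matComm (F α p) (U p) = 0) ∧
  (∀ i, mpderiv U p (Pi.single i 1, 0) = matComm (V p) (C i p) - C i p) ∧
  (∀ α, mpderiv U p (0, Pi.single α 1) = matComm (V p) (F α p) - F α p) ∧
  (∀ i, mpderiv W p (Pi.single i 1, 0) = matComm (W p) (C i p)) ∧
  (∀ α, mpderiv W p (0, Pi.single α 1) = matComm (W p) (F α p)) ∧
  (∀ i, mpderiv V p (Pi.single i 1, 0) = - matComm (W p) (C i p)) ∧
  (∀ α, mpderiv V p (0, Pi.single α 1) = - matComm (W p) (F α p))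

section Aux

variable {m l n : ℕ}

/-- A continuous linear functional on `Pt m l` vanishing on the standard basis is zero. -/
lemma aux_clm_zero (L : Pt m l →L[ℂ] ℂ)
    (h1 : ∀ i, L (Pi.single i 1, 0) = 0) (h2 : ∀ α, L (0, Pi.single α 1) = 0) : L = 0 := by
  have key : ∀ w : Fin m → ℂ, ∀ z : Fin l → ℂ,
      ((w, z) : Pt m l) = (∑ i, w i • ((Pi.single i 1, 0) : Pt m l)) +
        ∑ α, z α • ((0, Pi.single α 1) : Pt m l) := by
    intro w z
    have hw : ∀ (k : ℕ) (v : Fin k → ℂ), ∑ i, v i • (Pi.single i 1 : Fin k → ℂ) = v := by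
      intro k v
      funext j
      simp [Finset.sum_apply, Pi.single_apply, mul_ite, Finset.sum_ite_eq]
    apply Prod.ext
    · simp [Prod.fst_sum, hw]
    · simp [Prod.snd_sum, hw]
  apply ContinuousLinearMap.ext
  intro v
  have hv := key v.1 v.2
  rw [show v = (v.1, v.2) from rfl, hv]
  simp only [map_add, map_sum, map_smul, h1, h2, smul_zero, smul_eq_mul, mul_zero,
    Finset.sum_const_zero, add_zero, ContinuousLinearMap.zero_apply]

/-- A ℂ-differentiable function with vanishing partials (in all basis directions)
on an open preconnected set is constant. -/
lemma aux_const_on {s : Set (Pt m l)} (ho : IsOpen s) (hc : IsPreconnected s)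
    {g : Pt m l → ℂ} (hd : ∀ x ∈ s, DifferentiableAt ℂ g x)
    (hz1 : ∀ x ∈ s, ∀ i, fderiv ℂ g x (Pi.single i 1, 0) = 0)
    (hz2 : ∀ x ∈ s, ∀ α, fderiv ℂ g x (0, Pi.single α 1) = 0)
    {x y : Pt m l} (hx : x ∈ s) (hy : y ∈ s) : g x = g y := by
  have hdat : ∀ z ∈ s, DifferentiableAt ℂ g z := hd
  have hz : ∀ z ∈ s, fderiv ℂ g z = 0 := fun z hzs =>
    aux_clm_zero _ (hz1 z hzs) (hz2 z hzs)
  -- local constancy on balls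
  have hloc : ∀ z ∈ s, ∀ᶠ w in nhds z, g w = g z := by
    intro z hzs
    obtain ⟨ε, hε, hball⟩ := Metric.isOpen_iff.mp ho z hzs
    filter_upwards [Metric.ball_mem_nhds z hε] with w hw
    refine (convex_ball z ε).is_const_of_fderivWithin_eq_zero
      (fun u hu => (hdat u (hball hu)).differentiableWithinAt)
      (fun u hu => ?_) hw (Metric.mem_ball_self hε)
    rw [fderivWithin_of_isOpen Metric.isOpen_ball hu]
    exact hz u (hball hu)
  -- clopen argument
  by_contra hne
  have hT : IsOpen {z | z ∈ s ∧ g z = g x} := by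
    rw [isOpen_iff_mem_nhds]
    rintro z ⟨hzs, hze⟩
    filter_upwards [hloc z hzs, ho.mem_nhds hzs] with w hw hws
    exact ⟨hws, hw.trans hze⟩
  have hT' : IsOpen {z | z ∈ s ∧ g z ≠ g x} := by
    rw [isOpen_iff_mem_nhds]
    rintro z ⟨hzs, hze⟩
    filter_upwards [hloc z hzs, ho.mem_nhds hzs] with w hw hws
    exact ⟨hws, hw.trans_ne hze⟩
  obtain ⟨u, hu, hu1, hu2⟩ := hc _ _ hT hT'
    (fun z hzs => by by_cases h : g z = g x <;> [left; right] <;> exact ⟨hzs, h⟩)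
    ⟨x, hx, hx, rfl⟩ ⟨y, hy, hy, fun h => hne h.symm⟩
  exact hu2.2 hu1.2

/-- Additive rearrangement used for formula (2.58). -/
lemma aux_rearr {M : Type*} [AddCommGroup M] {up uq wp wq ap aq xp xq : M}
    (h : up + wp + ap - xp = uq + wq + aq - xq) :
    up = uq - (wp - wq) + (xp - xq) - (ap - aq) := by
  have h2 : up - (uq - (wp - wq) + (xp - xq) - (ap - aq)) =
      (up + wp + ap - xp) - (uq + wq + aq - xq) := by abel
  rw [h, sub_self] at h2
  exact sub_eq_zero.mp h2

/-- Entries of mpderiv. -/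
lemma mpderiv_apply {E : Type*} [NormedAddCommGroup E] [NormedSpace ℂ E]
    (f : E → Mat n) (p v : E) (k j : Fin n) :
    mpderiv f p v k j = fderiv ℂ (fun q => f q k j) p v := rfl

/-- mpderiv of a sum. -/
lemma mpderiv_add {E : Type*} [NormedAddCommGroup E] [NormedSpace ℂ E]
    {f g : E → Mat n} {p : E}
    (hf : ∀ k j, DifferentiableAt ℂ (fun q => f q k j) p)
    (hg : ∀ k j, DifferentiableAt ℂ (fun q => g q k j) p) (v : E) :
    mpderiv (fun q => f q + g q) p v = mpderiv f p v + mpderiv g p v := by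
  funext k j
  have : (fun q => (f q + g q) k j) = fun q => f q k j + g q k j := rfl
  simp only [mpderiv_apply, Matrix.add_apply, this, fderiv_fun_add (hf k j) (hg k j)]
  rfl

/-- mpderiv of a difference. -/
lemma mpderiv_sub {E : Type*} [NormedAddCommGroup E] [NormedSpace ℂ E]
    {f g : E → Mat n} {p : E}
    (hf : ∀ k j, DifferentiableAt ℂ (fun q => f q k j) p)
    (hg : ∀ k j, DifferentiableAt ℂ (fun q => g q k j) p) (v : E) :
    mpderiv (fun q => f q - g q) p v = mpderiv f p v - mpderiv g p v := by
  funext k j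
  have : (fun q => (f q - g q) k j) = fun q => f q k j - g q k j := rfl
  simp only [mpderiv_apply, Matrix.sub_apply, this, fderiv_fun_sub (hf k j) (hg k j)]
  rfl

/-- mpderiv of left multiplication by a constant matrix. -/
lemma mpderiv_const_mul {E : Type*} [NormedAddCommGroup E] [NormedSpace ℂ E]
    {f : E → Mat n} {p : E}
    (hf : ∀ k j, DifferentiableAt ℂ (fun q => f q k j) p) (R : Mat n) (v : E) :
    mpderiv (fun q => R * f q) p v = R * mpderiv f p v := by
  funext k j
  have h1 : (fun q => (R * f q) k j) = fun q => ∑ x, R k x * f q x j := by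
    funext q; simp [Matrix.mul_apply]
  have hd : ∀ x ∈ Finset.univ, DifferentiableAt ℂ (fun q => R k x * f q x j) p :=
    fun x _ => (hf x j).const_mul _
  simp only [mpderiv_apply, Matrix.mul_apply, h1]
  rw [fderiv_fun_sum hd]
  simp only [ContinuousLinearMap.coe_sum', Finset.sum_apply]
  refine Finset.sum_congr rfl fun x _ => ?_
  rw [fderiv_const_mul (hf x j)]
  simp

/-- mpderiv of right multiplication by a constant matrix. -/
lemma mpderiv_mul_const {E : Type*} [NormedAddCommGroup E] [NormedSpace ℂ E]
    {f : E → Mat n} {p : E}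
    (hf : ∀ k j, DifferentiableAt ℂ (fun q => f q k j) p) (R : Mat n) (v : E) :
    mpderiv (fun q => f q * R) p v = mpderiv f p v * R := by
  funext k j
  have h1 : (fun q => (f q * R) k j) = fun q => ∑ x, f q k x * R x j := by
    funext q; simp [Matrix.mul_apply]
  have hd : ∀ x ∈ Finset.univ, DifferentiableAt ℂ (fun q => f q k x * R x j) p :=
    fun x _ => (hf k x).mul_const _
  simp only [mpderiv_apply, Matrix.mul_apply, h1]
  rw [fderiv_fun_sum hd]
  simp only [ContinuousLinearMap.coe_sum', Finset.sum_apply]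
  refine Finset.sum_congr rfl fun x _ => ?_
  rw [fderiv_mul_const (hf k x)]
  simp [mul_comm]

/-- Entrywise differentiability of `R * f`. -/
lemma aux_diffAt_mul_left {E : Type*} [NormedAddCommGroup E] [NormedSpace ℂ E]
    {f : E → Mat n} {p : E}
    (hf : ∀ k j, DifferentiableAt ℂ (fun q => f q k j) p) (R : Mat n) :
    ∀ k j, DifferentiableAt ℂ (fun q => (R * f q) k j) p := by
  intro k j
  have h1 : (fun q => (R * f q) k j) = fun q => ∑ x, R k x * f q x j := by
    funext q; simp [Matrix.mul_apply]
  rw [h1]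
  exact DifferentiableAt.fun_sum (fun x _ => (hf x j).const_mul _)

/-- Entrywise differentiability of `f * R`. -/
lemma aux_diffAt_mul_right {E : Type*} [NormedAddCommGroup E] [NormedSpace ℂ E]
    {f : E → Mat n} {p : E}
    (hf : ∀ k j, DifferentiableAt ℂ (fun q => f q k j) p) (R : Mat n) :
    ∀ k j, DifferentiableAt ℂ (fun q => (f q * R) k j) p := by
  intro k j
  have h1 : (fun q => (f q * R) k j) = fun q => ∑ x, f q k x * R x j := by
    funext q; simp [Matrix.mul_apply]
  rw [h1]
  exact DifferentiableAt.fun_sum (fun x _ => (hf k x).mul_const _)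

end Aux

theorem stmt_3
    (n m l : ℕ) (hn : 0 < n) (hl : 0 < l)
    (N : Set (Pt m l)) (hNopen : IsOpen N) (hNconn : IsConnected N)
    (hN0 : (0 : Pt m l) ∈ N)
    (C : Fin m → Pt m l → Mat n) (F : Fin l → Pt m l → Mat n)
    (U V W : Pt m l → Mat n)
    (hCd : ∀ i, MDiffOn (C i) N) (hFd : ∀ α, MDiffOn (F α) N)
    (hUd : MDiffOn U N) (hVd : MDiffOn V N) (hWd : MDiffOn W N)
    (hsys : ∀ p ∈ N, FullSystemAt C F U V W p) :
    -- (1) V + W is a constant matrix Res_∞ (= its value V 0 + W 0 at the origin)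
    (∀ p ∈ N, ∀ q ∈ N, V p + W p = V q + W q) ∧
    -- (2) with a primitive A of the 1-form, U + W + A − [Res_∞, A] is constant
    (∀ A : Pt m l → Mat n, MDiffOn A N →
      (∀ p ∈ N, ∀ i, mpderiv A p (Pi.single i 1, 0) = C i p) →
      (∀ p ∈ N, ∀ α, mpderiv A p (0, Pi.single α 1) = F α p) →
      (∀ p ∈ N, ∀ q ∈ N,
        U p + W p + A p - matComm (V 0 + W 0) (A p) =
          U q + W q + A q - matComm (V 0 + W 0) (A q)) ∧
      -- in particular, formula (2.58)
      (∀ (t : Fin m → ℂ) (y : Fin l → ℂ),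
        ((t, y) : Pt m l) ∈ N → ((t, 0) : Pt m l) ∈ N →
        U (t, y) = U (t, 0) - (W (t, y) - W (t, 0)) +
          matComm (V 0 + W 0) (A (t, y) - A (t, 0)) - (A (t, y) - A (t, 0)))) := by
  have hPre := hNconn.isPreconnected
  have dAt : ∀ f : Pt m l → Mat n, MDiffOn f N → ∀ p ∈ N, ∀ k j,
      DifferentiableAt ℂ (fun q => f q k j) p := fun f hf p hp k j =>
    (hf k j p hp).differentiableAt (hNopen.mem_nhds hp)
  -- Part 1 : V + W is constant on N
  have key1 : ∀ x ∈ N, ∀ v : Pt m l, ∀ Cv : Mat n,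
      mpderiv V x v = - matComm (W x) Cv → mpderiv W x v = matComm (W x) Cv →
      mpderiv (fun q => V q + W q) x v = 0 := by
    intro x hx v Cv hV hW
    rw [mpderiv_add (f := V) (g := W) (dAt V hVd x hx) (dAt W hWd x hx), hV, hW]
    simp
  have hVW0 : ∀ x ∈ N, ∀ v : Pt m l,
      (∃ i, v = ((Pi.single i 1, 0) : Pt m l)) ∨ (∃ α, v = ((0, Pi.single α 1) : Pt m l)) →
      mpderiv (fun q => V q + W q) x v = 0 := by
    intro x hx v hv
    obtain ⟨_, _, _, _, _, _, _, _, _, _, h11, h12, h13, h14⟩ := hsys x hx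
    rcases hv with ⟨i, rfl⟩ | ⟨α, rfl⟩
    · exact key1 x hx _ _ (h13 i) (h11 i)
    · exact key1 x hx _ _ (h14 α) (h12 α)
  have hpart1 : ∀ p ∈ N, ∀ q ∈ N, V p + W p = V q + W q := by
    intro p hp q hq
    ext k j
    refine aux_const_on hNopen hPre (g := fun r => (V r + W r) k j)
      (fun x hx => (dAt V hVd x hx k j).add (dAt W hWd x hx k j))
      (fun x hx i => ?_) (fun x hx α => ?_) hp hq
    · have h0 := hVW0 x hx _ (Or.inl ⟨i, rfl⟩)
      have : fderiv ℂ (fun r => (V r + W r) k j) x ((Pi.single i 1, 0) : Pt m l) =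
          mpderiv (fun q => V q + W q) x ((Pi.single i 1, 0) : Pt m l) k j := rfl
      rw [this, h0]; rfl
    · have h0 := hVW0 x hx _ (Or.inr ⟨α, rfl⟩)
      have : fderiv ℂ (fun r => (V r + W r) k j) x ((0, Pi.single α 1) : Pt m l) =
          mpderiv (fun q => V q + W q) x ((0, Pi.single α 1) : Pt m l) k j := rfl
      rw [this, h0]; rfl
  refine ⟨hpart1, ?_⟩
  -- Part 2
  intro A hAd hAt hAy
  set R : Mat n := V 0 + W 0 with hRdef
  have hR : ∀ p ∈ N, V p + W p = R := fun p hp => hpart1 p hp 0 hN0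
  set G : Pt m l → Mat n := fun q => U q + W q + A q - matComm R (A q) with hGdef
  -- differentiability of entries of G
  have dG : ∀ x ∈ N, ∀ k j, DifferentiableAt ℂ (fun q => G q k j) x := by
    intro x hx k j
    exact (((dAt U hUd x hx k j).add (dAt W hWd x hx k j)).add (dAt A hAd x hx k j)).sub
      ((aux_diffAt_mul_left (dAt A hAd x hx) R k j).sub
        (aux_diffAt_mul_right (dAt A hAd x hx) R k j))
  -- the derivative of G vanishes on N
  have key2 : ∀ x ∈ N, ∀ v : Pt m l, ∀ Cv : Mat n,
      mpderiv U x v = matComm (V x) Cv - Cv → mpderiv W x v = matComm (W x) Cv →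
      mpderiv A x v = Cv → mpderiv G x v = 0 := by
    intro x hx v Cv hU hW hA
    have e1 : mpderiv G x v =
        mpderiv (fun q => U q + W q + A q) x v - mpderiv (fun q => R * A q - A q * R) x v := by
      exact mpderiv_sub
        (fun k j => ((dAt U hUd x hx k j).add (dAt W hWd x hx k j)).add (dAt A hAd x hx k j))
        (fun k j => (aux_diffAt_mul_left (dAt A hAd x hx) R k j).sub
          (aux_diffAt_mul_right (dAt A hAd x hx) R k j)) v
    rw [e1,
      mpderiv_add (f := fun q => U q + W q) (g := A)
        (fun k j => (dAt U hUd x hx k j).add (dAt W hWd x hx k j)) (dAt A hAd x hx),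
      mpderiv_add (f := U) (g := W) (dAt U hUd x hx) (dAt W hWd x hx),
      mpderiv_sub (f := fun q => R * A q) (g := fun q => A q * R)
        (aux_diffAt_mul_left (dAt A hAd x hx) R)
        (aux_diffAt_mul_right (dAt A hAd x hx) R),
      mpderiv_const_mul (dAt A hAd x hx) R, mpderiv_mul_const (dAt A hAd x hx) R,
      hU, hW, hA, ← hR x hx]
    simp only [matComm]
    noncomm_ring
  have hG0 : ∀ x ∈ N, ∀ v : Pt m l,
      (∃ i, v = ((Pi.single i 1, 0) : Pt m l)) ∨ (∃ α, v = ((0, Pi.single α 1) : Pt m l)) →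
      mpderiv G x v = 0 := by
    intro x hx v hv
    obtain ⟨_, _, _, _, _, _, _, _, h9, h10, h11, h12, _, _⟩ := hsys x hx
    rcases hv with ⟨i, rfl⟩ | ⟨α, rfl⟩
    · exact key2 x hx _ _ (h9 i) (h11 i) (hAt x hx i)
    · exact key2 x hx _ _ (h10 α) (h12 α) (hAy x hx α)
  have hpart2 : ∀ p ∈ N, ∀ q ∈ N, G p = G q := by
    intro p hp q hq
    ext k j
    refine aux_const_on hNopen hPre (g := fun r => G r k j)
      (fun x hx => dG x hx k j) (fun x hx i => ?_) (fun x hx α => ?_) hp hq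
    · have h0 := hG0 x hx _ (Or.inl ⟨i, rfl⟩)
      have : fderiv ℂ (fun r => G r k j) x ((Pi.single i 1, 0) : Pt m l) =
          mpderiv G x ((Pi.single i 1, 0) : Pt m l) k j := rfl
      rw [this, h0]; rfl
    · have h0 := hG0 x hx _ (Or.inr ⟨α, rfl⟩)
      have : fderiv ℂ (fun r => G r k j) x ((0, Pi.single α 1) : Pt m l) =
          mpderiv G x ((0, Pi.single α 1) : Pt m l) k j := rfl
      rw [this, h0]; rfl
  refine ⟨hpart2, ?_⟩
  intro t y h1 h2
  have hbil : matComm R (A (t, y) - A (t, 0)) =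
      matComm R (A (t, y)) - matComm R (A (t, 0)) := by
    simp only [matComm]; noncomm_ring
  rw [hbil]
  exact aux_rearr (hpart2 (t, y) h1 (t, 0) h2)
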